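/- Matrix mutation preserves the rank of a matrix: if B̃ is an m×n integer matrix with skew-symmetrizable principal part and B̃' is obtained from B̃ by matrix mutation in direction k ∈ [1,n], then rank(B̃') = rank(B̃). -/

import Mathlib

open Matrix in
private lemma left_mul_aux {m : Type*} {α : Type*} [Fintype m] [DecidableEq m]
    (w : m → ℤ) (k : m) (C : Matrix m α ℤ) (i : m) (j : α) :
    (((1 : Matrix m m ℤ) + vecMulVec w (Pi.single k 1)) * C) i j = C i j + w i * C k j := by
  simp [Matrix.add_mul, Matrix.mul_apply, vecMulVec_apply, Pi.single_apply,
    mul_ite, ite_mul, Finset.sum_ite_eq, Finset.sum_add_distrib, Matrix.one_apply, add_mul]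

open Matrix in
private lemma right_mul_aux {m : Type*} {α : Type*} [Fintype α] [DecidableEq α]
    (z : α → ℤ) (k : α) (C : Matrix m α ℤ) (i : m) (j : α) :
    (C * ((1 : Matrix α α ℤ) + vecMulVec (Pi.single k 1) z)) i j = C i j + C i k * z j := by
  simp [Matrix.mul_add, Matrix.mul_apply, vecMulVec_apply, Pi.single_apply,
    mul_ite, ite_mul, Finset.sum_ite_eq, Finset.sum_add_distrib, Matrix.one_apply, mul_add,
    mul_comm]

open Matrix in
private lemma MM_aux {m : Type*} [Fintype m] [DecidableEq m] (w : m → ℤ) (k : m)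
    (hwk : w k = -2) :
    ((1 : Matrix m m ℤ) + vecMulVec w (Pi.single k 1)) *
      ((1 : Matrix m m ℤ) + vecMulVec w (Pi.single k 1)) = 1 := by
  ext i j
  rw [left_mul_aux]
  simp only [Matrix.add_apply, Matrix.one_apply, vecMulVec_apply, Pi.single_apply, hwk]
  by_cases hj : j = k
  · simp [hj, hwk]
  · simp [hj, (Ne.symm hj : ¬ k = j)]

open Matrix in
private lemma NN_aux {m : Type*} [Fintype m] [DecidableEq m] (z : m → ℤ) (k : m)
    (hzk : z k = -2) :
    ((1 : Matrix m m ℤ) + vecMulVec (Pi.single k 1) z) *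
      ((1 : Matrix m m ℤ) + vecMulVec (Pi.single k 1) z) = 1 := by
  ext i j
  rw [right_mul_aux]
  simp only [Matrix.add_apply, Matrix.one_apply, vecMulVec_apply, Pi.single_apply, hzk]
  by_cases hi : i = k
  · simp [hi, hzk]
  · simp [hi, (Ne.symm hi : ¬ k = i)]

private lemma key_div (a c : ℤ) : (|a| * c + a * |c|) / 2 = max 0 a * c + a * max 0 (-c) := by
  have h : |a| * c + a * |c| = 2 * (max 0 a * c + a * max 0 (-c)) := by
    rcases le_total 0 a with ha | ha <;> rcases le_total 0 c with hc | hc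
    · rw [abs_of_nonneg ha, abs_of_nonneg hc, max_eq_right ha,
        max_eq_left (by omega : -c ≤ 0)]; ring
    · rw [abs_of_nonneg ha, abs_of_nonpos hc, max_eq_right ha,
        max_eq_right (by omega : 0 ≤ -c)]; ring
    · rw [abs_of_nonpos ha, abs_of_nonneg hc, max_eq_left ha,
        max_eq_left (by omega : -c ≤ 0)]; ring
    · rw [abs_of_nonpos ha, abs_of_nonpos hc, max_eq_left ha,
        max_eq_right (by omega : 0 ≤ -c)]; ring
  rw [h, Int.mul_ediv_cancel_left _ (by norm_num)]

/-- Mutation in direction `k ∈ [1,n]` of an `m × n` integer matrix whose rows are indexed by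
`Fin n ⊕ Fin p` (the first `n` rows forming the principal part). -/
def extMatrixMutation {n p : ℕ} (B : Matrix (Fin n ⊕ Fin p) (Fin n) ℤ) (k : Fin n) :
    Matrix (Fin n ⊕ Fin p) (Fin n) ℤ :=
  fun i j =>
    if i = Sum.inl k ∨ j = k then -B i j
    else B i j + (|B i k| * B (Sum.inl k) j + B i k * |B (Sum.inl k) j|) / 2

/-- Matrix mutation preserves the rank of an `m × n` integer matrix with
skew-symmetrizable principal part. -/
theorem rank_extMatrixMutation {n p : ℕ} (B : Matrix (Fin n ⊕ Fin p) (Fin n) ℤ) (k : Fin n)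
    (hdiag : ∀ i : Fin n, B (Sum.inl i) i = 0)
    (hskew : ∃ d : Fin n → ℤ, (∀ i, 0 < d i) ∧
      ∀ i j : Fin n, d i * B (Sum.inl i) j = -(d j * B (Sum.inl j) i)) :
    (extMatrixMutation B k).rank = B.rank := by
  classical
  open Matrix in
  let w : Fin n ⊕ Fin p → ℤ := fun i => if i = Sum.inl k then -2 else max 0 (B i k)
  let z : Fin n → ℤ := fun j => if j = k then -2 else max 0 (-(B (Sum.inl k) j))
  let M : Matrix (Fin n ⊕ Fin p) (Fin n ⊕ Fin p) ℤ :=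
    1 + Matrix.vecMulVec w (Pi.single (Sum.inl k) 1)
  let N : Matrix (Fin n) (Fin n) ℤ := 1 + Matrix.vecMulVec (Pi.single k 1) z
  have hwk : w (Sum.inl k) = -2 := if_pos rfl
  have hzk : z k = -2 := if_pos rfl
  have hMM : M * M = 1 := MM_aux w (Sum.inl k) hwk
  have hNN : N * N = 1 := NN_aux z k hzk
  have hMdet : IsUnit M.det :=
    IsUnit.of_mul_eq_one _ (by rw [← Matrix.det_mul, hMM, Matrix.det_one])
  have hNdet : IsUnit N.det :=
    IsUnit.of_mul_eq_one _ (by rw [← Matrix.det_mul, hNN, Matrix.det_one])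
  have hEq : extMatrixMutation B k = M * B * N := by
    ext i j
    rw [show (M * B * N) i j = (M * B) i j + (M * B) i k * z j from
        right_mul_aux z k (M * B) i j,
      left_mul_aux w (Sum.inl k) B i j, left_mul_aux w (Sum.inl k) B i k,
      hdiag k, mul_zero, add_zero]
    show extMatrixMutation B k i j = B i j + w i * B (Sum.inl k) j + B i k * z j
    by_cases hi : i = Sum.inl k <;> by_cases hj : j = k
    · rw [extMatrixMutation, if_pos (Or.inl hi), hi, hj, hwk, hzk, hdiag k]
      ring
    · rw [extMatrixMutation, if_pos (Or.inl hi), hi, hwk,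
        show z j = max 0 (-(B (Sum.inl k) j)) from if_neg hj, hdiag k]
      ring
    · rw [extMatrixMutation, if_pos (Or.inr hj), hj, hzk, hdiag k,
        show w i = max 0 (B i k) from if_neg hi]
      ring
    · rw [extMatrixMutation, if_neg (by simp [hi, hj]),
        show w i = max 0 (B i k) from if_neg hi,
        show z j = max 0 (-(B (Sum.inl k) j)) from if_neg hj, key_div]
      ring
  rw [hEq, Matrix.rank_mul_eq_left_of_isUnit_det _ _ hNdet,
    Matrix.rank_mul_eq_right_of_isUnit_det _ _ hMdet]
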